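/- Let μ be a Borel probability measure on ℝ³ with compact support and let C : ℝ³ → ℝ³ be a bounded Borel measurable map. Define the 3 × 3 real matrix A := ∫ x (C x)ᵀ dμ(x), i.e. A_{ij} = ∫ x_i (C x)_j dμ(x). Then the infimum over all orthogonal transformations U of ℝ³ of ∫ ‖U x − C(x)‖² dμ(x) is attained and equals ∫ ‖x‖² dμ(x) + ∫ ‖C(x)‖² dμ(x) − 2 · trace(√(Aᵀ A)), where √(Aᵀ A) is the positive semidefinite square root of Aᵀ A (so trace(√(Aᵀ A)) is the sum of the singular values of A). -/

import Mathlib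

open MeasureTheory Matrix

noncomputable section

local notation "E3" => EuclideanSpace ℝ (Fin 3)

open scoped ComplexOrder in
def Matrix.PosSemidef.sqrt {n 𝕜 : Type*} [Fintype n] [RCLike 𝕜] [DecidableEq n]
    {A : Matrix n n 𝕜} (hA : A.PosSemidef) : Matrix n n 𝕜 :=
  (hA.1.eigenvectorUnitary : Matrix n n 𝕜) *
    diagonal (fun i => ((√(hA.1.eigenvalues i) : ℝ) : 𝕜)) *
    (star hA.1.eigenvectorUnitary : Matrix n n 𝕜)

lemma psd_sqrt_mul_self {n : ℕ} {A : Matrix (Fin n) (Fin n) ℝ} (hA : A.PosSemidef) :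
    hA.sqrt * hA.sqrt = A := by
  have hU := Matrix.UnitaryGroup.star_mul_self hA.1.eigenvectorUnitary
  have hD : diagonal (fun i => (RCLike.ofReal (√(hA.1.eigenvalues i)) : ℝ))
      * diagonal (fun i => (RCLike.ofReal (√(hA.1.eigenvalues i)) : ℝ))
      = diagonal (RCLike.ofReal ∘ hA.1.eigenvalues) := by
    rw [diagonal_mul_diagonal]
    congr 1; funext i
    simp [Real.mul_self_sqrt (hA.eigenvalues_nonneg i)]
  conv_rhs => rw [hA.1.spectral_theorem]
  simp only [Matrix.PosSemidef.sqrt, Matrix.mul_assoc] at hU ⊢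
  rw [← Matrix.mul_assoc (star _) _ _, hU, Matrix.one_mul, ← Matrix.mul_assoc _ _ (star _), hD]
  simp [Unitary.conjStarAlgAut_apply, Matrix.mul_assoc]

lemma psd_posSemidef_sqrt {n : ℕ} {A : Matrix (Fin n) (Fin n) ℝ} (hA : A.PosSemidef) :
    hA.sqrt.PosSemidef := by
  have h := (PosSemidef.diagonal (d := fun i => ((√(hA.1.eigenvalues i) : ℝ) : ℝ))
    (fun i => Real.sqrt_nonneg _)).mul_mul_conjTranspose_same
    (hA.1.eigenvectorUnitary : Matrix (Fin n) (Fin n) ℝ)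
  simpa [Matrix.PosSemidef.sqrt, Matrix.star_eq_conjTranspose] using h

lemma toEuclideanLin_mul' {n : ℕ} (M N : Matrix (Fin n) (Fin n) ℝ) (x : EuclideanSpace ℝ (Fin n)) :
    Matrix.toEuclideanLin (M * N) x = Matrix.toEuclideanLin M (Matrix.toEuclideanLin N x) := by
  simp [Matrix.toEuclideanLin_apply, Matrix.mulVec_mulVec]

lemma unitary_of_inner_preserving' {n : ℕ}
    (T : EuclideanSpace ℝ (Fin n) →ₗ[ℝ] EuclideanSpace ℝ (Fin n))
    (hT : ∀ x y, (inner ℝ (T x) (T y) : ℝ) = inner ℝ x y) :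
    (Matrix.toEuclideanLin.symm T) ∈ Matrix.unitaryGroup (Fin n) ℝ := by
  set M := Matrix.toEuclideanLin.symm T with hM
  have hTM : ∀ x, Matrix.toEuclideanLin M x = T x := by
    intro x; rw [hM, LinearEquiv.apply_symm_apply]
  have hMe : ∀ i k, M k i = T (EuclideanSpace.single i 1) k := by
    intro i k
    have := hTM (EuclideanSpace.single i 1)
    rw [Matrix.toEuclideanLin_apply] at this
    have h2 := congrFun (congrArg (WithLp.equiv 2 (Fin n → ℝ)) this) k
    exact (by simpa [Matrix.mulVec_single] using h2.symm : T (EuclideanSpace.single i 1) k = M k i).symm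
  rw [Matrix.mem_unitaryGroup_iff']
  ext i j
  have hst : (star M * M) i j = ∑ k, M k i * M k j := by
    simp [Matrix.mul_apply, Matrix.star_apply, mul_comm]
  rw [hst]
  have hinner := hT (EuclideanSpace.single j 1) (EuclideanSpace.single i 1)
  rw [PiLp.inner_apply, PiLp.inner_apply] at hinner
  simp only [RCLike.inner_apply, starRingEnd_apply, star_trivial] at hinner
  have hr : ∑ k, M k i * M k j
      = ∑ k, T (EuclideanSpace.single i 1) k * T (EuclideanSpace.single j 1) k :=
    Finset.sum_congr rfl fun k _ => by rw [hMe i k, hMe j k]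
  rw [hr, hinner]
  by_cases h : i = j
  · simp [h, EuclideanSpace.single_apply, Matrix.one_apply]
  · simp [h, Ne.symm h, EuclideanSpace.single_apply, Matrix.one_apply]

lemma trace_mul_le_of_unitary' {n : ℕ} (O S : Matrix (Fin n) (Fin n) ℝ)
    (hO : O ∈ Matrix.unitaryGroup (Fin n) ℝ) (hS : S.PosSemidef) :
    (O * S).trace ≤ S.trace := by
  obtain ⟨V, hV⟩ : ∃ V : Matrix.unitaryGroup (Fin n) ℝ,
      S = (V : Matrix (Fin n) (Fin n) ℝ) * diagonal (RCLike.ofReal ∘ hS.1.eigenvalues)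
        * star (V : Matrix (Fin n) (Fin n) ℝ) :=
    ⟨hS.1.eigenvectorUnitary, hS.1.spectral_theorem⟩
  set d := hS.1.eigenvalues with hd
  have hd0 : ∀ i, 0 ≤ d i := hS.eigenvalues_nonneg
  set P : Matrix (Fin n) (Fin n) ℝ := star (V : Matrix (Fin n) (Fin n) ℝ) * O * V with hP
  have hPu : P ∈ Matrix.unitaryGroup (Fin n) ℝ :=
    mul_mem (mul_mem (Unitary.star_mem V.2) hO) V.2
  have h1 : (O * S).trace = (P * diagonal (RCLike.ofReal ∘ d)).trace := by
    rw [hV, hP, ← Matrix.mul_assoc, ← Matrix.mul_assoc, Matrix.trace_mul_comm]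
    simp only [← Matrix.mul_assoc]
  have h2 : S.trace = ∑ i, d i := by
    rw [hV, Matrix.trace_mul_cycle, (Matrix.mem_unitaryGroup_iff').mp V.2, Matrix.one_mul,
      Matrix.trace_diagonal]
    simp
  rw [h1, h2, Matrix.trace]
  have he : ∀ i, (P * diagonal (RCLike.ofReal ∘ d)).diag i = P i i * d i := by
    intro i; simp [Matrix.diag, Matrix.mul_diagonal]
  rw [Finset.sum_congr rfl fun i _ => he i]
  apply Finset.sum_le_sum
  intro i _
  calc P i i * d i ≤ 1 * d i := by
        apply mul_le_mul_of_nonneg_right _ (hd0 i)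
        calc P i i ≤ |P i i| := le_abs_self _
        _ ≤ 1 := by simpa [Real.norm_eq_abs] using entry_norm_bound_of_unitary hPu i i
    _ = d i := one_mul _

lemma polar_decomp' {n : ℕ} (A S : Matrix (Fin n) (Fin n) ℝ) (hS : S.PosSemidef)
    (hSS : S * S = Aᴴ * A) :
    ∃ Wiso : EuclideanSpace ℝ (Fin n) ≃ₗᵢ[ℝ] EuclideanSpace ℝ (Fin n),
      ∀ x, Wiso (Matrix.toEuclideanLin S x) = Matrix.toEuclideanLin A x := by
  set E := EuclideanSpace ℝ (Fin n)
  set Al : E →ₗ[ℝ] E := Matrix.toEuclideanLin A with hAl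
  set Sl : E →ₗ[ℝ] E := Matrix.toEuclideanLin S with hSl
  have hadj : ∀ (M : Matrix (Fin n) (Fin n) ℝ) (x : E),
      (inner ℝ (Matrix.toEuclideanLin M x) (Matrix.toEuclideanLin M x) : ℝ)
        = inner ℝ x (Matrix.toEuclideanLin (Mᴴ * M) x) := by
    intro M x
    rw [toEuclideanLin_mul', Matrix.toEuclideanLin_conjTranspose_eq_adjoint,
      LinearMap.adjoint_inner_right]
  have hnorm : ∀ x, ‖Al x‖ = ‖Sl x‖ := by
    intro x
    have h1 : (inner ℝ (Al x) (Al x) : ℝ) = inner ℝ (Sl x) (Sl x) := by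
      rw [hadj A x, hadj S x, show Sᴴ * S = Aᴴ * A by rw [← hSS, hS.1.eq]]
    rw [← Real.sqrt_sq (norm_nonneg (Al x)), ← Real.sqrt_sq (norm_nonneg (Sl x)),
      ← real_inner_self_eq_norm_sq, ← real_inner_self_eq_norm_sq, h1]
  have hle : LinearMap.ker Sl ≤ LinearMap.ker Al := by
    intro x hx
    rw [LinearMap.mem_ker] at hx ⊢
    have := hnorm x
    rw [hx, norm_zero, norm_eq_zero] at this
    exact this
  set q : (E ⧸ LinearMap.ker Sl) →ₗ[ℝ] E := (LinearMap.ker Sl).liftQ Al hle with hq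
  set e := Sl.quotKerEquivRange with he
  set φ : LinearMap.range Sl →ₗ[ℝ] E :=
    q ∘ₗ (e.symm : LinearMap.range Sl →ₗ[ℝ] E ⧸ LinearMap.ker Sl) with hφ
  have hφx : ∀ x : E, φ ⟨Sl x, LinearMap.mem_range_self Sl x⟩ = Al x := by
    intro x
    have h1 : e (Submodule.Quotient.mk x) = ⟨Sl x, LinearMap.mem_range_self Sl x⟩ :=
      Subtype.ext (Sl.quotKerEquivRange_apply_mk x)
    have h2 : e.symm ⟨Sl x, LinearMap.mem_range_self Sl x⟩ = Submodule.Quotient.mk x := by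
      rw [← h1, LinearEquiv.symm_apply_apply]
    simp [hφ, h2, hq, Submodule.liftQ_apply]
  have hφi : ∀ v : LinearMap.range Sl, ‖φ v‖ = ‖v‖ := by
    rintro ⟨_, x, rfl⟩
    rw [hφx x]
    have h3 : ‖(⟨Sl x, LinearMap.mem_range_self Sl x⟩ : LinearMap.range Sl)‖ = ‖Sl x‖ := rfl
    rw [h3, hnorm]
  set φL : LinearMap.range Sl →ₗᵢ[ℝ] E := ⟨φ, hφi⟩ with hφL
  set Wl : E →ₗᵢ[ℝ] E := φL.extend with hWl
  have hWS : ∀ x, Wl (Sl x) = Al x := by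
    intro x
    have h4 : Wl ((⟨Sl x, LinearMap.mem_range_self Sl x⟩ : LinearMap.range Sl) : E)
        = φL ⟨Sl x, LinearMap.mem_range_self Sl x⟩ := φL.extend_apply _
    simpa [hφL] using h4.trans (hφx x)
  refine ⟨Wl.toLinearIsometryEquiv rfl, fun x => ?_⟩
  show (Wl.toLinearIsometryEquiv rfl) (Sl x) = Al x
  rw [LinearIsometry.toLinearIsometryEquiv_apply]
  exact hWS x

/-- For a compactly supported Borel probability measure `μ` on `ℝ³`, a bounded
Borel map `C`, and the matrix `A` with entries `A i j = ∫ xᵢ (C x)ⱼ dμ(x)`, the infimum of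
`∫ ‖U x − C x‖² dμ` over orthogonal transformations `U` is attained, and equals
`∫ ‖x‖² dμ + ∫ ‖C x‖² dμ − 2 · trace √(Aᵀ A)`. -/
theorem optimal_orthogonal_value
    (μ : Measure E3) [IsProbabilityMeasure μ]
    (K : Set E3) (hK : IsCompact K) (hμK : μ Kᶜ = 0)
    (C : E3 → E3) (hCmeas : Measurable C) (B : ℝ) (hCbdd : ∀ x, ‖C x‖ ≤ B)
    (A : Matrix (Fin 3) (Fin 3) ℝ)
    (hAdef : ∀ i j, A i j = ∫ x, x i * C x j ∂μ)
    (hA : (Aᵀ * A).PosSemidef) :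
    ∃ Ustar : E3 ≃ₗᵢ[ℝ] E3,
      (∀ U : E3 ≃ₗᵢ[ℝ] E3,
        ∫ x, ‖Ustar x - C x‖ ^ 2 ∂μ ≤ ∫ x, ‖U x - C x‖ ^ 2 ∂μ) ∧
      ∫ x, ‖Ustar x - C x‖ ^ 2 ∂μ
        = (∫ x, ‖x‖ ^ 2 ∂μ) + (∫ x, ‖C x‖ ^ 2 ∂μ) - 2 * hA.sqrt.trace := by
  classical
  -- matrix of an isometry
  set mat : (E3 ≃ₗᵢ[ℝ] E3) → Matrix (Fin 3) (Fin 3) ℝ :=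
    fun U => Matrix.toEuclideanLin.symm U.toLinearIsometry.toLinearMap with hmat
  have hmatU : ∀ (U : E3 ≃ₗᵢ[ℝ] E3) (x : E3), Matrix.toEuclideanLin (mat U) x = U x := by
    intro U x; rw [hmat, LinearEquiv.apply_symm_apply]; rfl
  have hmatUu : ∀ U : E3 ≃ₗᵢ[ℝ] E3, mat U ∈ Matrix.unitaryGroup (Fin 3) ℝ := by
    intro U
    exact unitary_of_inner_preserving' _ (fun x y => by
      simpa using U.inner_map_map x y)
  have hcoord : ∀ (U : E3 ≃ₗᵢ[ℝ] E3) (x : E3) (j), U x j = ∑ i, mat U j i * x i := by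
    intro U x j
    have h := hmatU U x
    rw [Matrix.toEuclideanLin_apply] at h
    have h2 := congrFun (congrArg (WithLp.equiv 2 (Fin 3 → ℝ)) h) j
    simpa [Matrix.mulVec, dotProduct] using h2.symm
  -- bounds
  obtain ⟨R, hR⟩ := isBounded_iff_forall_norm_le.mp hK.isBounded
  set R' := max R 0 with hR'
  have hR'0 : 0 ≤ R' := le_max_right _ _
  have hB0 : 0 ≤ B := le_trans (norm_nonneg _) (hCbdd 0)
  have haeK : ∀ᵐ x ∂μ, x ∈ K := by
    rw [MeasureTheory.ae_iff]
    simpa [Set.compl_def] using hμK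
  have haeR : ∀ᵐ x ∂μ, ‖x‖ ≤ R' := haeK.mono fun x hx => le_trans (hR x hx) (le_max_left _ _)
  have habs : ∀ (x : E3) (i : Fin 3), |x i| ≤ ‖x‖ := by
    intro x i
    rw [EuclideanSpace.norm_eq, ← Real.sqrt_sq_eq_abs]
    apply Real.sqrt_le_sqrt
    have := Finset.single_le_sum (f := fun j => ‖x j‖ ^ 2)
      (fun j _ => sq_nonneg _) (Finset.mem_univ i)
    simpa [Real.norm_eq_abs, sq_abs] using this
  -- integrability helper
  have hint : ∀ (f : E3 → ℝ), AEStronglyMeasurable f μ → ∀ (c : ℝ),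
      (∀ᵐ x ∂μ, |f x| ≤ c) → Integrable f μ := by
    intro f hf c hb
    exact Integrable.mono' (integrable_const c) hf (by simpa [Real.norm_eq_abs] using hb)
  have hxm : ∀ i : Fin 3, Measurable fun x : E3 => x i := by
    intro i
    exact (EuclideanSpace.proj (𝕜 := ℝ) i).continuous.measurable
  have hI1 : Integrable (fun x : E3 => ‖x‖ ^ 2) μ := by
    refine hint _ ((continuous_norm.pow 2).measurable.aestronglyMeasurable) (R' ^ 2) ?_
    refine haeR.mono fun x hx => ?_
    rw [abs_of_nonneg (sq_nonneg _)]
    exact pow_le_pow_left₀ (norm_nonneg x) hx 2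
  have hI2 : Integrable (fun x : E3 => ‖C x‖ ^ 2) μ := by
    refine hint _ ((hCmeas.norm.pow_const 2).aestronglyMeasurable) (B ^ 2) ?_
    refine Filter.Eventually.of_forall fun x => ?_
    rw [abs_of_nonneg (sq_nonneg _)]
    exact pow_le_pow_left₀ (norm_nonneg _) (hCbdd x) 2
  have hIij : ∀ i j : Fin 3, Integrable (fun x : E3 => x i * C x j) μ := by
    intro i j
    refine hint _ (((hxm i).mul ((hxm j).comp hCmeas)).aestronglyMeasurable) (R' * B) ?_
    refine haeR.mono fun x hx => ?_
    rw [abs_mul]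
    exact mul_le_mul (le_trans (habs x i) hx)
      (le_trans (habs (C x) j) (hCbdd x)) (abs_nonneg _) hR'0
  -- pointwise expansion
  have hpt : ∀ (U : E3 ≃ₗᵢ[ℝ] E3) (x : E3),
      ‖U x - C x‖ ^ 2 = ‖x‖ ^ 2 + ‖C x‖ ^ 2
        - 2 * ∑ j, ∑ i, mat U j i * (x i * C x j) := by
    intro U x
    have h1 : ‖U x - C x‖ ^ 2 = ‖U x‖ ^ 2 - 2 * (inner ℝ (U x) (C x) : ℝ) + ‖C x‖ ^ 2 :=
      norm_sub_sq_real _ _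
    have h2 : (inner ℝ (U x) (C x) : ℝ) = ∑ j, (U x) j * (C x) j := by
      rw [PiLp.inner_apply]
      simp [RCLike.inner_apply, mul_comm]
    have h3 : ∑ j, (U x) j * (C x) j = ∑ j, ∑ i, mat U j i * (x i * C x j) := by
      refine Finset.sum_congr rfl fun j _ => ?_
      rw [hcoord U x j, Finset.sum_mul]
      exact Finset.sum_congr rfl fun i _ => by ring
    rw [h1, h2, h3, U.norm_map]
    ring
  have hIg : ∀ U : E3 ≃ₗᵢ[ℝ] E3,
      Integrable (fun x : E3 => ∑ j, ∑ i, mat U j i * (x i * C x j)) μ := by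
    intro U
    exact integrable_finset_sum _ fun j _ =>
      integrable_finset_sum _ fun i _ => (hIij i j).const_mul _
  have htr : ∀ M : Matrix (Fin 3) (Fin 3) ℝ, (M * A).trace = ∑ j, ∑ i, M j i * A i j := by
    intro M
    simp [Matrix.trace, Matrix.diag, Matrix.mul_apply]
  have hval : ∀ U : E3 ≃ₗᵢ[ℝ] E3,
      ∫ x, ‖U x - C x‖ ^ 2 ∂μ
        = (∫ x, ‖x‖ ^ 2 ∂μ) + (∫ x, ‖C x‖ ^ 2 ∂μ) - 2 * ((mat U) * A).trace := by
    intro U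
    have e1 : ∫ x, ‖U x - C x‖ ^ 2 ∂μ
        = ∫ x, (‖x‖ ^ 2 + ‖C x‖ ^ 2 - 2 * ∑ j, ∑ i, mat U j i * (x i * C x j)) ∂μ :=
      integral_congr_ae (Filter.Eventually.of_forall fun x => hpt U x)
    have hI12 : Integrable (fun x : E3 => ‖x‖ ^ 2 + ‖C x‖ ^ 2) μ := hI1.add hI2
    have hIg2 : Integrable (fun x : E3 => 2 * ∑ j, ∑ i, mat U j i * (x i * C x j)) μ :=
      (hIg U).const_mul 2
    rw [e1, integral_sub hI12 hIg2, integral_add hI1 hI2, integral_const_mul]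
    have e2 : ∫ x, (∑ j, ∑ i, mat U j i * (x i * C x j)) ∂μ = ∑ j, ∑ i, mat U j i * A i j := by
      rw [integral_finset_sum _ (f := fun j x => ∑ i, mat U j i * (x i * C x j)) fun j _ =>
        integrable_finset_sum _ fun i _ => (hIij i j).const_mul _]
      refine Finset.sum_congr rfl fun j _ => ?_
      rw [integral_finset_sum _ (f := fun i x => mat U j i * (x i * C x j)) fun i _ => (hIij i j).const_mul _]
      refine Finset.sum_congr rfl fun i _ => ?_
      rw [integral_const_mul, hAdef i j]
    rw [e2, htr]
  -- matrix endgame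
  set S := hA.sqrt with hSdef
  have hSS : S * S = Aᴴ * A := by
    rw [Matrix.conjTranspose_eq_transpose_of_trivial, hSdef, psd_sqrt_mul_self hA]
  obtain ⟨Wiso, hWiso⟩ := polar_decomp' A S (psd_posSemidef_sqrt hA) hSS
  have hAW : A = (mat Wiso) * S := by
    apply Matrix.toEuclideanLin.injective
    refine LinearMap.ext fun x => ?_
    rw [toEuclideanLin_mul', hmatU]
    exact (hWiso x).symm
  have htrS : ((mat Wiso.symm) * A).trace = S.trace := by
    have hMS : (mat Wiso.symm) * A = S := by
      apply Matrix.toEuclideanLin.injective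
      refine LinearMap.ext fun x => ?_
      rw [toEuclideanLin_mul', hmatU, ← hWiso x, Wiso.symm_apply_apply]
    rw [hMS]
  refine ⟨Wiso.symm, fun U => ?_, by rw [hval Wiso.symm, htrS]⟩
  rw [hval U, hval Wiso.symm, htrS]
  have hle' : ((mat U) * A).trace ≤ S.trace := by
    have h5 : (mat U) * A = ((mat U) * (mat Wiso)) * S := by
      rw [Matrix.mul_assoc, ← hAW]
    rw [h5]
    exact trace_mul_le_of_unitary' _ _ (mul_mem (hmatUu U) (hmatUu Wiso)) (psd_posSemidef_sqrt hA)
  linarith
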